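/- arXiv:0905.3594 — 3 statements merged into one kernel-verified Lean document; each statement's English description precedes it below -/
import Mathlib

section
/- Let b₁ = b₂ = 1, b₃ = 3 and b₃ ≤ b₄ ≤ ⋯ ≤ b_k be positive integers such that T_{x₁} + T_{x₂} + 3T_{x₃} + b₄T_{x₄} + ⋯ represents 8. Then k ≥ 4 and b₄ ≤ 8. -/
set_option maxHeartbeats 1000000


def T (x : ℤ) : ℤ := x * (x + 1) / 2

lemma two_T (x : ℤ) : 2 * T x = x * (x + 1) :=
  Int.two_mul_ediv_two_of_even (Int.even_mul_succ_self x)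

lemma T_nonneg (x : ℤ) : 0 ≤ T x := by
  have h := two_T x
  nlinarith [sq_nonneg (2 * x + 1)]

lemma T_vals (x : ℤ) (h : T x ≤ 8) : T x = 0 ∨ T x = 1 ∨ T x = 3 ∨ T x = 6 := by
  have h2 := two_T x
  have hx1 : x ≤ 3 := by nlinarith
  have hx2 : -4 ≤ x := by nlinarith
  interval_cases x <;> omega

lemma no_rep (x y z : ℤ) : T x + T y + 3 * T z ≠ 8 := by
  intro h
  have hx := T_nonneg x
  have hy := T_nonneg y
  have hz := T_nonneg z
  have h1 := T_vals x (by omega)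
  have h2 := T_vals y (by omega)
  have h3 := T_vals z (by omega)
  omega

def gaux (k : ℕ) (b x : Fin k → ℤ) (j : ℕ) : ℤ :=
  if h : j < k then b ⟨j, h⟩ * T (x ⟨j, h⟩) else 0

theorem escalation_eight (k : ℕ) (b : Fin k → ℤ) (hb : ∀ i, 0 < b i)
    (hmono : Monotone b) (hk3 : 3 ≤ k)
    (hb1 : b ⟨0, by omega⟩ = 1) (hb2 : b ⟨1, by omega⟩ = 1)
    (hb3 : b ⟨2, by omega⟩ = 3)
    (h8 : ∃ x : Fin k → ℤ, ∑ i, b i * T (x i) = 8) :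
    ∃ hk : 4 ≤ k, b ⟨3, by omega⟩ ≤ 8 := by
  obtain ⟨x, hx⟩ := h8
  have hgi : ∀ (j : ℕ) (h : j < k), gaux k b x j = b ⟨j, h⟩ * T (x ⟨j, h⟩) := by
    intro j h; simp [gaux, h]
  have hgnn : ∀ j, 0 ≤ gaux k b x j := by
    intro j
    simp only [gaux]
    split
    · exact mul_nonneg (le_of_lt (hb _)) (T_nonneg _)
    · exact le_refl 0
  have hsum : ∑ j ∈ Finset.range k, gaux k b x j = 8 := by
    rw [← hx, ← Fin.sum_univ_eq_sum_range]
    apply Finset.sum_congr rfl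
    intro i _
    simp [gaux, i.isLt]
  have h03 : ∑ j ∈ Finset.Ico 0 3, gaux k b x j + ∑ j ∈ Finset.Ico 3 k, gaux k b x j
      = ∑ j ∈ Finset.Ico 0 k, gaux k b x j :=
    Finset.sum_Ico_consecutive (gaux k b x) (by omega) (by omega)
  have hr3 : ∑ j ∈ Finset.Ico 0 3, gaux k b x j = gaux k b x 0 + gaux k b x 1 + gaux k b x 2 := by
    rw [← Finset.range_eq_Ico]
    simp [Finset.sum_range_succ]
  have hrk : ∑ j ∈ Finset.Ico 0 k, gaux k b x j = 8 := by
    rw [← Finset.range_eq_Ico]; exact hsum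
  have h0k : (0:ℕ) < k := by omega
  have h1k : (1:ℕ) < k := by omega
  have h2k : (2:ℕ) < k := by omega
  have hsnn : 0 ≤ ∑ j ∈ Finset.Ico 3 k, gaux k b x j := Finset.sum_nonneg (fun j _ => hgnn j)
  have hkey : T (x ⟨0, h0k⟩) + T (x ⟨1, h1k⟩) + 3 * T (x ⟨2, h2k⟩)
      + ∑ j ∈ Finset.Ico 3 k, gaux k b x j = 8 := by
    rw [← hrk, ← h03, hr3, hgi 0 h0k, hgi 1 h1k, hgi 2 h2k]
    rw [hb1, hb2, hb3]
    ring
  clear hsum h03 hr3 hrk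
  have hk4 : 4 ≤ k := by
    by_contra hcon
    have hk3' : k = 3 := by omega
    rw [show Finset.Ico 3 k = ∅ by rw [hk3']; exact Finset.Ico_self 3,
      Finset.sum_empty] at hkey
    exact no_rep (x ⟨0, h0k⟩) (x ⟨1, h1k⟩) (x ⟨2, h2k⟩) (by omega)
  refine ⟨hk4, ?_⟩
  have h3k : (3:ℕ) < k := by omega
  by_contra hcon
  push_neg at hcon
  have hb4 : 9 ≤ b ⟨3, h3k⟩ := hcon
  have hT0 := T_nonneg (x ⟨0, h0k⟩)
  have hT1 := T_nonneg (x ⟨1, h1k⟩)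
  have hT2 := T_nonneg (x ⟨2, h2k⟩)
  have hs8 : ∑ j ∈ Finset.Ico 3 k, gaux k b x j ≤ 8 := by omega
  have hzero : ∀ j ∈ Finset.Ico 3 k, gaux k b x j = 0 := by
    intro j hj
    rw [Finset.mem_Ico] at hj
    have hjk : j < k := hj.2
    have hble : b ⟨3, h3k⟩ ≤ b ⟨j, hjk⟩ := hmono (by simp [Fin.le_def]; omega)
    have hTnn := T_nonneg (x ⟨j, hjk⟩)
    have hle : gaux k b x j ≤ ∑ j ∈ Finset.Ico 3 k, gaux k b x j :=
      Finset.single_le_sum (fun i _ => hgnn i) (by rw [Finset.mem_Ico]; omega)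
    rw [hgi j hjk] at hle ⊢
    rcases eq_or_lt_of_le hTnn with h0 | h1
    · rw [← h0, mul_zero]
    · exfalso
      have h9b : (9:ℤ) ≤ b ⟨j, hjk⟩ := le_trans hb4 hble
      have h9 : 9 * 1 ≤ b ⟨j, hjk⟩ * T (x ⟨j, hjk⟩) :=
        mul_le_mul h9b h1 zero_le_one (le_trans (by norm_num) h9b)
      omega
  have hs0 : ∑ j ∈ Finset.Ico 3 k, gaux k b x j = 0 := Finset.sum_eq_zero hzero
  exact no_rep (x ⟨0, h0k⟩) (x ⟨1, h1k⟩) (x ⟨2, h2k⟩) (by omega)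
end

section
/- Let N ≥ 13 be an integer and define f^{(N)}(x,y) = N·T_x + N·T_y + (2xy + x + y) + 1. Then f^{(N)}(x,y) ≥ 0 for all integers x, y; f^{(N)} takes the value 0 exactly at (x,y) ∈ {(0,−1), (−1,0)} and the value 1 exactly at (x,y) ∈ {(0,0), (−1,−1)}; and for all other (x,y), f^{(N)}(x,y) ≥ N − 12. -/
theorem fN_values (N : ℤ) (hN : 13 ≤ N)
    (f : ℤ → ℤ → ℤ) (hf : ∀ x y, f x y = N * T x + N * T y + (2 * x * y + x + y) + 1) :
    (∀ x y : ℤ, 0 ≤ f x y) ∧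
    (∀ x y : ℤ, f x y = 0 ↔ ((x, y) = (0, -1) ∨ (x, y) = (-1, 0))) ∧
    (∀ x y : ℤ, f x y = 1 ↔ ((x, y) = (0, 0) ∨ (x, y) = (-1, -1))) ∧
    (∀ x y : ℤ, (x, y) ∉ ({(0, -1), (-1, 0), (0, 0), (-1, -1)} : Set (ℤ × ℤ)) →
      N - 12 ≤ f x y) := by
  have hT : ∀ x : ℤ, 2 * T x = x * (x + 1) := by
    intro x
    exact Int.mul_ediv_cancel' (Int.even_mul_succ_self x).two_dvd
  have key : ∀ x y : ℤ, 8 * f x y =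
      N * ((2*x+1)^2 + (2*y+1)^2 - 2) + 4*(2*x+1)*(2*y+1) + 4 := by
    intro x y
    linear_combination 8 * hf x y + 4 * N * hT x + 4 * N * hT y
  have sq1 : ∀ x : ℤ, 1 ≤ (2*x+1)^2 := by
    intro x
    rcases le_or_gt 0 x with h | h
    · nlinarith
    · nlinarith
  have sq9 : ∀ x : ℤ, x ≠ 0 → x ≠ -1 → 9 ≤ (2*x+1)^2 := by
    intro x h0 h1
    have : 1 ≤ x ∨ x ≤ -2 := by omega
    rcases this with h | h
    · nlinarith
    · nlinarith
  have big : ∀ x y : ℤ, ((x ≠ 0 ∧ x ≠ -1) ∨ (y ≠ 0 ∧ y ≠ -1)) → N - 2 ≤ f x y := by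
    intro x y h
    have k := key x y
    rcases h with ⟨h0, h1⟩ | ⟨h0, h1⟩
    · have h9 := sq9 x h0 h1
      have h1' := sq1 y
      nlinarith [sq_nonneg (2*x+1+(2*y+1)), mul_nonneg (by linarith : (0:ℤ) ≤ N - 2)
        (by linarith : (0:ℤ) ≤ (2*x+1)^2 + (2*y+1)^2 - 10)]
    · have h9 := sq9 y h0 h1
      have h1' := sq1 x
      nlinarith [sq_nonneg (2*x+1+(2*y+1)), mul_nonneg (by linarith : (0:ℤ) ≤ N - 2)
        (by linarith : (0:ℤ) ≤ (2*x+1)^2 + (2*y+1)^2 - 10)]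
  refine ⟨?_, ?_, ?_, ?_⟩
  · intro x y
    by_cases h : (x = 0 ∨ x = -1) ∧ (y = 0 ∨ y = -1)
    · obtain ⟨hx, hy⟩ := h
      rcases hx with rfl | rfl <;> rcases hy with rfl | rfl <;>
        rw [hf] <;> norm_num [T]
    · have : (x ≠ 0 ∧ x ≠ -1) ∨ (y ≠ 0 ∧ y ≠ -1) := by tauto
      linarith [big x y this]
  · intro x y
    constructor
    · intro h0
      by_cases h : (x = 0 ∨ x = -1) ∧ (y = 0 ∨ y = -1)
      · obtain ⟨hx, hy⟩ := h
        rcases hx with rfl | rfl <;> rcases hy with rfl | rfl <;>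
          rw [hf] at h0 <;> norm_num [T] at h0 <;> simp
      · have : (x ≠ 0 ∧ x ≠ -1) ∨ (y ≠ 0 ∧ y ≠ -1) := by tauto
        linarith [big x y this]
    · rintro (h | h) <;> simp only [Prod.mk.injEq] at h <;>
        obtain ⟨rfl, rfl⟩ := h <;> rw [hf] <;> norm_num [T]
  · intro x y
    constructor
    · intro h0
      by_cases h : (x = 0 ∨ x = -1) ∧ (y = 0 ∨ y = -1)
      · obtain ⟨hx, hy⟩ := h
        rcases hx with rfl | rfl <;> rcases hy with rfl | rfl <;>
          rw [hf] at h0 <;> norm_num [T] at h0 <;> simp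
      · have : (x ≠ 0 ∧ x ≠ -1) ∨ (y ≠ 0 ∧ y ≠ -1) := by tauto
        linarith [big x y this]
    · rintro (h | h) <;> simp only [Prod.mk.injEq] at h <;>
        obtain ⟨rfl, rfl⟩ := h <;> rw [hf] <;> norm_num [T]
  · intro x y h
    simp only [Set.mem_insert_iff, Set.mem_singleton_iff, Prod.mk.injEq] at h
    push_neg at h
    have : (x ≠ 0 ∧ x ≠ -1) ∨ (y ≠ 0 ∧ y ≠ -1) := by tauto
    linarith [big x y this]
end

section
/- For every positive integer n there exists a quadratic polynomial f in finitely many integer variables with integer values, taking only nonnegative values on ℤ^k and attaining 0, such that f represents every nonnegative integer except n. -/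
/-- quadratic coefficient at coordinate `j` -/
def Dc (p j : ℕ) : ℤ := if j = p + 4 then (2*p+3)*(p+2) else (p+2)

/-- linear coefficient at coordinate `j` -/
def Ec (p j : ℕ) : ℤ :=
  if j < p then -(p+1) else if j < p + 4 then 0 else -((2*p+3)*(p+1))

/-- local value at coordinate `j` -/
def Vc (p j : ℕ) (t : ℤ) : ℤ := Dc p j * t^2 + Ec p j * t

/-- the gadget polynomial -/
def Gg (p : ℕ) (t : ℤ) : ℤ := (p+2)*t^2 - (p+1)*t

lemma Vc_gadget (p j : ℕ) (t : ℤ) (h : j < p) : Vc p j t = Gg p t := by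
  unfold Vc Dc Ec Gg
  rw [if_neg (by omega), if_pos h]
  ring

lemma Vc_square (p j : ℕ) (t : ℤ) (h1 : p ≤ j) (h2 : j < p + 4) :
    Vc p j t = (p+2) * t^2 := by
  unfold Vc Dc Ec
  rw [if_neg (by omega), if_neg (by omega), if_pos h2]
  ring

lemma Vc_last (p : ℕ) (t : ℤ) : Vc p (p+4) t = (2*p+3) * Gg p t := by
  unfold Vc Dc Ec Gg
  rw [if_pos rfl, if_neg (by omega), if_neg (by omega)]
  ring

lemma Gg_nonneg (p : ℕ) (t : ℤ) : 0 ≤ Gg p t := by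
  unfold Gg
  rcases le_or_gt t 0 with h | h
  · nlinarith [sq_nonneg t]
  · have ht : 1 ≤ t := h
    nlinarith [sq_nonneg (t - 1)]

lemma Gg_zero (p : ℕ) : Gg p 0 = 0 := by simp [Gg]

lemma Gg_one (p : ℕ) : Gg p 1 = 1 := by unfold Gg; ring

lemma Gg_small (p : ℕ) (t : ℤ) (h : Gg p t ≤ p + 1) : Gg p t = 0 ∨ Gg p t = 1 := by
  rcases lt_trichotomy t 0 with ht | ht | ht
  · exfalso
    have ht1 : t ≤ -1 := by omega
    unfold Gg at h
    nlinarith [sq_nonneg (t + 1)]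
  · left; rw [ht]; exact Gg_zero p
  · rcases eq_or_lt_of_le (show (1:ℤ) ≤ t from ht) with h1 | h1
    · right; rw [← h1]; exact Gg_one p
    · exfalso
      have ht2 : 2 ≤ t := h1
      unfold Gg at h
      nlinarith [sq_nonneg (t - 2)]

lemma Vc_nonneg (p j : ℕ) (t : ℤ) (hj : j < p + 5) : 0 ≤ Vc p j t := by
  rcases lt_or_ge j p with h | h
  · rw [Vc_gadget p j t h]; exact Gg_nonneg p t
  · rcases lt_or_ge j (p+4) with h2 | h2
    · rw [Vc_square p j t h h2]; positivity
    · have h3 : j = p + 4 := by omega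
      rw [h3, Vc_last]
      have := Gg_nonneg p t
      positivity

lemma sum_ite_lt (r N : ℕ) :
    ∑ j ∈ Finset.range N, (if j < r then (1:ℤ) else 0) = min r N := by
  induction N with
  | zero => simp
  | succ N ih =>
    rw [Finset.sum_range_succ, ih]
    split_ifs with h
    · have : (min r (N+1) : ℕ) = min r N + 1 := by omega
      rw [this]; push_cast; ring
    · have : (min r (N+1) : ℕ) = min r N := by omega
      rw [this, add_zero]

theorem no_finiteness_for_quadratic_polynomials (n : ℕ) (hn : 0 < n) :
    ∃ (k : ℕ) (A : Matrix (Fin k) (Fin k) ℚ) (L : Fin k → ℚ) (C : ℚ),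
      ∀ f : (Fin k → ℤ) → ℚ,
        (∀ x, f x = (∑ i, ∑ j, A i j * (x i : ℚ) * (x j : ℚ)) + (∑ i, L i * (x i : ℚ)) + C) →
        (∀ x, ∃ m : ℕ, f x = (m : ℚ)) ∧
        (∃ x, f x = 0) ∧
        (∀ m : ℕ, m ≠ n → ∃ x, f x = (m : ℚ)) ∧
        (¬ ∃ x, f x = (n : ℚ)) := by
  obtain ⟨p, rfl⟩ : ∃ p, n = p + 1 := ⟨n - 1, by omega⟩
  refine ⟨p + 5, Matrix.diagonal (fun i => ((Dc p i.val : ℤ) : ℚ)),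
    fun i => ((Ec p i.val : ℤ) : ℚ), 0, ?_⟩
  intro f hf
  -- f is the cast of an integer-valued sum of local values
  have hF : ∀ x : Fin (p+5) → ℤ,
      f x = ((∑ i : Fin (p+5), Vc p i.val (x i) : ℤ) : ℚ) := by
    intro x
    rw [hf]
    have h1 : ∀ i : Fin (p+5),
        ∑ j, Matrix.diagonal (fun i => ((Dc p i.val : ℤ) : ℚ)) i j * (x i : ℚ) * (x j : ℚ)
          = ((Dc p i.val : ℤ) : ℚ) * (x i : ℚ) * (x i : ℚ) := by
      intro i
      rw [Finset.sum_eq_single i]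
      · rw [Matrix.diagonal_apply_eq]
      · intro j _ hj
        rw [Matrix.diagonal_apply_ne' _ hj]
        ring
      · intro h; exact absurd (Finset.mem_univ i) h
    rw [Finset.sum_congr rfl (fun i _ => h1 i), ← Finset.sum_add_distrib]
    push_cast [Vc]
    rw [add_zero]
    exact Finset.sum_congr rfl (fun i _ => by ring)
  refine ⟨?_, ?_, ?_, ?_⟩
  · -- nonnegative integer values
    intro x
    have hnn : 0 ≤ ∑ i : Fin (p+5), Vc p i.val (x i) :=
      Finset.sum_nonneg (fun i _ => Vc_nonneg p i.val (x i) i.isLt)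
    refine ⟨(∑ i : Fin (p+5), Vc p i.val (x i)).toNat, ?_⟩
    rw [hF x]
    norm_cast
    omega
  · -- zero is attained
    refine ⟨fun _ => 0, ?_⟩
    rw [hF]
    norm_num [Vc]
  · -- represents every m ≠ n
    intro m hm
    set r := m % (p + 2) with hr
    set q := m / (p + 2) with hq
    have hmq : (p + 2) * q + r = m := Nat.div_add_mod m (p + 2)
    have hrlt : r < p + 2 := Nat.mod_lt _ (by omega)
    rcases Nat.lt_or_ge r (p + 1) with hcase | hcase
    · -- r ≤ p : use r gadgets at 1, four squares of q
      obtain ⟨a, b, c, d, habcd⟩ := Nat.sum_four_squares q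
      set X : ℕ → ℤ := fun j =>
        if j < r then 1 else if j = p then (a:ℤ) else if j = p+1 then (b:ℤ)
        else if j = p+2 then (c:ℤ) else if j = p+3 then (d:ℤ) else 0 with hX
      refine ⟨fun i => X i.val, ?_⟩
      rw [hF]
      have key : ∑ i : Fin (p+5), Vc p i.val (X i.val) = (m : ℤ) := by
        rw [Fin.sum_univ_eq_sum_range (fun j => Vc p j (X j)) (p+5)]
        rw [show p + 5 = (p+4) + 1 by ring, Finset.sum_range_succ,
          Finset.sum_range_succ, Finset.sum_range_succ, Finset.sum_range_succ,
          Finset.sum_range_succ]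
        have e0 : ∑ j ∈ Finset.range p, Vc p j (X j) = (r : ℤ) := by
          rw [Finset.sum_congr rfl (fun j hj => ?_), sum_ite_lt r p]
          · have : min r p = r := by omega
            rw [this]
          · have hjp : j < p := Finset.mem_range.mp hj
            rw [Vc_gadget p j _ hjp, hX]
            by_cases h : j < r
            · simp only [if_pos h, Gg_one]
            · simp only [if_neg h, if_neg (show j ≠ p by omega),
                if_neg (show j ≠ p+1 by omega), if_neg (show j ≠ p+2 by omega),
                if_neg (show j ≠ p+3 by omega), Gg_zero]
        have ea : X p = (a:ℤ) := by
          rw [hX]; simp only [if_neg (show ¬ p < r by omega)]; norm_num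
        have eb : X (p+1) = (b:ℤ) := by
          rw [hX]
          simp only [if_neg (show ¬ p+1 < r by omega), if_neg (show p+1 ≠ p by omega)]
          norm_num
        have ec : X (p+2) = (c:ℤ) := by
          rw [hX]
          simp only [if_neg (show ¬ p+2 < r by omega), if_neg (show p+2 ≠ p by omega),
            if_neg (show p+2 ≠ p+1 by omega)]
          norm_num
        have ed : X (p+3) = (d:ℤ) := by
          rw [hX]
          simp only [if_neg (show ¬ p+3 < r by omega), if_neg (show p+3 ≠ p by omega),
            if_neg (show p+3 ≠ p+1 by omega), if_neg (show p+3 ≠ p+2 by omega)]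
          norm_num
        have ew : X (p+4) = 0 := by
          rw [hX]
          simp only [if_neg (show ¬ p+4 < r by omega), if_neg (show p+4 ≠ p by omega),
            if_neg (show p+4 ≠ p+1 by omega), if_neg (show p+4 ≠ p+2 by omega),
            if_neg (show p+4 ≠ p+3 by omega)]
        rw [e0, ea, eb, ec, ed, ew,
          Vc_square p p _ le_rfl (by omega),
          Vc_square p (p+1) _ (by omega) (by omega),
          Vc_square p (p+2) _ (by omega) (by omega),
          Vc_square p (p+3) _ (by omega) (by omega),
          Vc_last p 0, Gg_zero]
        have : ((a:ℤ)^2 + b^2 + c^2 + d^2) = (q:ℤ) := by exact_mod_cast habcd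
        have hm' : ((p:ℤ) + 2) * q + r = m := by exact_mod_cast hmq
        nlinarith [this, hm']
      rw [key]
      norm_cast
    · -- r = p + 1 : the residue-n case, m ≥ 2p+3, use the w-gadget
      have hr1 : r = p + 1 := by omega
      have hq1 : 1 ≤ q := by
        rcases Nat.eq_zero_or_pos q with h0 | h0
        · exfalso
          apply hm
          rw [h0, Nat.mul_zero, Nat.zero_add] at hmq
          omega
        · exact h0
      obtain ⟨a, b, c, d, habcd⟩ := Nat.sum_four_squares (q - 1)
      set X : ℕ → ℤ := fun j =>
        if j = p then (a:ℤ) else if j = p+1 then (b:ℤ)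
        else if j = p+2 then (c:ℤ) else if j = p+3 then (d:ℤ)
        else if j = p+4 then 1 else 0 with hX
      refine ⟨fun i => X i.val, ?_⟩
      rw [hF]
      have key : ∑ i : Fin (p+5), Vc p i.val (X i.val) = (m : ℤ) := by
        rw [Fin.sum_univ_eq_sum_range (fun j => Vc p j (X j)) (p+5)]
        rw [show p + 5 = (p+4) + 1 by ring, Finset.sum_range_succ,
          Finset.sum_range_succ, Finset.sum_range_succ, Finset.sum_range_succ,
          Finset.sum_range_succ]
        have e0 : ∑ j ∈ Finset.range p, Vc p j (X j) = 0 := by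
          apply Finset.sum_eq_zero
          intro j hj
          have hjp : j < p := Finset.mem_range.mp hj
          rw [Vc_gadget p j _ hjp, hX]
          simp only [if_neg (show j ≠ p by omega), if_neg (show j ≠ p+1 by omega),
            if_neg (show j ≠ p+2 by omega), if_neg (show j ≠ p+3 by omega),
            if_neg (show j ≠ p+4 by omega), Gg_zero]
        have ea : X p = (a:ℤ) := by rw [hX]; norm_num
        have eb : X (p+1) = (b:ℤ) := by
          rw [hX]; simp only [if_neg (show p+1 ≠ p by omega)]
          norm_num
        have ec : X (p+2) = (c:ℤ) := by
          rw [hX]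
          simp only [if_neg (show p+2 ≠ p by omega), if_neg (show p+2 ≠ p+1 by omega)]
          norm_num
        have ed : X (p+3) = (d:ℤ) := by
          rw [hX]
          simp only [if_neg (show p+3 ≠ p by omega), if_neg (show p+3 ≠ p+1 by omega),
            if_neg (show p+3 ≠ p+2 by omega)]
          norm_num
        have ew : X (p+4) = 1 := by
          rw [hX]
          simp only [if_neg (show p+4 ≠ p by omega), if_neg (show p+4 ≠ p+1 by omega),
            if_neg (show p+4 ≠ p+2 by omega), if_neg (show p+4 ≠ p+3 by omega)]
          norm_num
        rw [e0, ea, eb, ec, ed, ew,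
          Vc_square p p _ le_rfl (by omega),
          Vc_square p (p+1) _ (by omega) (by omega),
          Vc_square p (p+2) _ (by omega) (by omega),
          Vc_square p (p+3) _ (by omega) (by omega),
          Vc_last p 1, Gg_one]
        have h4 : ((a:ℤ)^2 + b^2 + c^2 + d^2) = ((q - 1 : ℕ) : ℤ) := by
          exact_mod_cast habcd
        have hq' : ((q - 1 : ℕ) : ℤ) = (q : ℤ) - 1 := by omega
        have hm' : ((p:ℤ) + 2) * q + (p + 1) = m := by
          have h5 := hmq
          rw [hr1] at h5
          exact_mod_cast h5
        rw [hq'] at h4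
        linear_combination ((p:ℤ) + 2) * h4 + hm'
      rw [key]
      norm_cast
  · -- n is not represented
    rintro ⟨x, hx⟩
    rw [hF] at hx
    have hsum : ∑ i : Fin (p+5), Vc p i.val (x i) = (p : ℤ) + 1 := by
      exact_mod_cast hx
    have hle : ∀ i : Fin (p+5), Vc p i.val (x i) ≤ (p:ℤ) + 1 := by
      intro i
      rw [← hsum]
      exact Finset.single_le_sum (fun j _ => Vc_nonneg p j.val (x j) j.isLt) (Finset.mem_univ i)
    have hbound : ∀ i : Fin (p+5),
        Vc p i.val (x i) ≤ (if i.val < p then (1:ℤ) else 0) := by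
      intro i
      have hi5 : i.val < p + 5 := i.isLt
      rcases lt_or_ge i.val p with h | h
      · rw [if_pos h]
        have := hle i
        rw [Vc_gadget p i.val _ h] at this ⊢
        rcases Gg_small p (x i) (by exact_mod_cast this) with h0 | h0 <;> omega
      · rw [if_neg (by omega)]
        rcases lt_or_ge i.val (p+4) with h2 | h2
        · have := hle i
          rw [Vc_square p i.val _ h h2] at this ⊢
          have hx2 : (x i)^2 ≤ 0 := by
            by_contra hc
            push_neg at hc
            have h1 : (1:ℤ) ≤ (x i)^2 := hc
            nlinarith
          nlinarith [sq_nonneg (x i), hx2]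
        · have h3 : i.val = p + 4 := by omega
          have hle' := hle i
          rw [h3] at hle' ⊢
          rw [Vc_last] at hle' ⊢
          have hg := Gg_nonneg p (x i)
          have hg0 : Gg p (x i) = 0 := by nlinarith [hg, hle']
          rw [hg0, mul_zero]
    have htot : ∑ i : Fin (p+5), Vc p i.val (x i)
        ≤ ∑ i : Fin (p+5), (if i.val < p then (1:ℤ) else 0) :=
      Finset.sum_le_sum (fun i _ => hbound i)
    rw [hsum, Fin.sum_univ_eq_sum_range (fun j => if j < p then (1:ℤ) else 0) (p+5),
      sum_ite_lt p (p+5)] at htot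
    omega
end
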